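/- arXiv:1208.4519 — 4 statements merged into one kernel-verified Lean document; each statement's English description precedes it below -/
import Mathlib

section
/- Let R be a commutative ring, S an R-module, and e ∈ S an element such that the evaluation map Hom_R(S,S) → S given by f ↦ f(e) is an isomorphism of R-modules. Then there exists a unique R-bilinear multiplication μ : S × S → S such that μ(e,e) = e. -/
theorem stmt_0 {R : Type*} [CommRing R] {S : Type*} [AddCommGroup S] [Module R S] (e : S)
    (he : Function.Bijective fun f : S →ₗ[R] S => f e) :
    ∃! μ : S →ₗ[R] S →ₗ[R] S, μ e e = e := by
  let E : (S →ₗ[R] S) ≃ₗ[R] S :=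
    LinearEquiv.ofBijective (LinearMap.applyₗ e) he
  have hE : ∀ f : S →ₗ[R] S, E f = f e := fun f => rfl
  have hid : E.symm e = LinearMap.id := by
    apply E.injective; rw [E.apply_symm_apply]; rfl
  refine ⟨(E.symm.toLinearMap).flip, ?_, ?_⟩
  · show E.symm e e = e
    rw [hid]; rfl
  · intro ν hν
    have hνe : ν e = LinearMap.id := by
      apply E.injective
      rw [hE]; exact hν.trans rfl
    have hflip : ν.flip = E.symm.toLinearMap := by
      ext y : 1
      apply E.injective
      show E (ν.flip y) = E (E.symm y)
      rw [E.apply_symm_apply, hE]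
      show ν e y = y
      rw [hνe]; rfl
    calc ν = ν.flip.flip := rfl
    _ = (E.symm.toLinearMap).flip := by rw [hflip]
end

section
/- Let R be a commutative ring, S an R-module, and e ∈ S such that evaluation at e gives an isomorphism Hom_R(S,S) ≅ S. Then the unique R-bilinear multiplication μ on S with μ(e,e) = e is commutative: μ(x,y) = μ(y,x) for all x, y ∈ S. -/
theorem stmt_1 {R : Type*} [CommRing R] {S : Type*} [AddCommGroup S] [Module R S] (e : S)
    (he : Function.Bijective fun f : S →ₗ[R] S => f e)
    (μ : S →ₗ[R] S →ₗ[R] S) (hμ : μ e e = e) :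
    ∀ x y : S, μ x y = μ y x := by
  have h : ∀ f g : S →ₗ[R] S, f e = g e → f = g := fun f g hfg => he.1 hfg
  have h1 : μ e = LinearMap.id := h _ _ (by simpa using hμ)
  have h2 : μ.flip e = LinearMap.id := h _ _ (by simpa using hμ)
  intro x y
  have h3 : μ.flip y = μ y := h _ _ (by
    simp only [LinearMap.flip_apply, h1]
    have := congrArg (fun f => f y) h2
    simpa using this.symm)
  calc μ x y = μ.flip y x := rfl
    _ = μ y x := by rw [h3]
end

section
/- Let R be a commutative ring, S an R-module, and e ∈ S such that evaluation at e gives an isomorphism Hom_R(S,S) ≅ S. Then for every n ≥ 1, any R-multilinear map S^n → S is uniquely determined by its value on (e, e, ..., e); that is, the map sending an R-multilinear map m : S^n → S to m(e,...,e) is a bijection onto S. -/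
/-- Evaluation of multilinear maps at a fixed point, as a linear map. -/
def evalML {R : Type*} [CommRing R] {S : Type*} [AddCommGroup S] [Module R S]
    (n : ℕ) (v : Fin n → S) :
    MultilinearMap R (fun _ : Fin n => S) S →ₗ[R] S where
  toFun m := m v
  map_add' _ _ := rfl
  map_smul' _ _ := rfl

/-- If evaluation at `e` is bijective on `End S`, then for any module `X`
linearly equivalent to `S`, evaluation at `e` on `Hom(S, X)` is bijective. -/
theorem eval_bij_of_equiv {R : Type*} [CommRing R] {S : Type*} [AddCommGroup S] [Module R S]
    (e : S) (he : Function.Bijective fun f : S →ₗ[R] S => f e)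
    {X : Type*} [AddCommGroup X] [Module R X] (φ : S ≃ₗ[R] X) :
    Function.Bijective (fun f : S →ₗ[R] X => f e) := by
  have h : (fun f : S →ₗ[R] X => f e) =
      (fun s : S => φ s) ∘ (fun g : S →ₗ[R] S => g e) ∘
        (fun f : S →ₗ[R] X => (φ.symm.toLinearMap ∘ₗ f : S →ₗ[R] S)) := by
    funext f
    simp
  rw [h]
  exact φ.bijective.comp (he.comp (LinearEquiv.congrRight φ.symm).bijective)

theorem eval_bij_all {R : Type*} [CommRing R] {S : Type*} [AddCommGroup S] [Module R S] (e : S)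
    (he : Function.Bijective fun f : S →ₗ[R] S => f e) (n : ℕ) :
    Function.Bijective
      (fun m : MultilinearMap R (fun _ : Fin n => S) S => m fun _ => e) := by
  induction n with
  | zero =>
      have : (fun m : MultilinearMap R (fun _ : Fin 0 => S) S => m fun _ => e) =
          (MultilinearMap.constLinearEquivOfIsEmpty R R (fun _ : Fin 0 => S) S).symm := by
        funext m
        simp [MultilinearMap.constLinearEquivOfIsEmpty]
        congr
        exact Subsingleton.elim _ _
      rw [this]
      exact (MultilinearMap.constLinearEquivOfIsEmpty R R (fun _ : Fin 0 => S) S).symm.bijective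
  | succ n ih =>
      set Φ := multilinearCurryLeftEquiv R (fun _ : Fin (n+1) => S) S with hΦ
      set ψ : S ≃ₗ[R] MultilinearMap R (fun _ : Fin n => S) S :=
        (LinearEquiv.ofBijective (evalML n (fun _ => e)) ih).symm with hψ
      have h : (fun m : MultilinearMap R (fun _ : Fin (n+1) => S) S => m fun _ => e) =
          (fun m' : MultilinearMap R (fun _ : Fin n => S) S => m' fun _ => e) ∘
          (fun f : S →ₗ[R] MultilinearMap R (fun _ : Fin n => S) S => f e) ∘
          (fun m => Φ m) := by
        funext m
        show (m fun _ => e) = m (Fin.cons e fun _ => e)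
        congr 1
        funext i
        induction i using Fin.cases <;> simp
      rw [h]
      exact ih.comp ((eval_bij_of_equiv e he ψ).comp Φ.bijective)

theorem stmt_3 {R : Type*} [CommRing R] {S : Type*} [AddCommGroup S] [Module R S] (e : S)
    (he : Function.Bijective fun f : S →ₗ[R] S => f e)
    (n : ℕ) (hn : 1 ≤ n) :
    Function.Bijective
      (fun m : MultilinearMap R (fun _ : Fin n => S) S => m fun _ => e) := by
  exact eval_bij_all e he n
end

section
/- Let R be a commutative ring and W ⊆ R a multiplicative subset. Set S = W⁻¹R (the localization), and let e = 1/1 ∈ S. Then the evaluation map Hom_R(S,S) → S, f ↦ f(e), is an isomorphism of R-modules. -/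
theorem stmt_5 {R : Type*} [CommRing R] (W : Submonoid R) :
    Function.Bijective fun f : Localization W →ₗ[R] Localization W => f (1 : Localization W) := by
  constructor
  · intro f g h
    refine IsLocalizedModule.linearMap_ext W (Algebra.linearMap R (Localization W))
      (Algebra.linearMap R (Localization W)) ?_
    ext
    simpa using h
  · intro s
    exact ⟨LinearMap.mulRight R s, one_mul s⟩
end
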